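/- Let U and V be Banach spaces, 0 < α ≤ 1 and 0 < γ < 1 with θ := α(1+γ) > 1. Let x: [0,T] → U be α-Hölder continuous with Hölder seminorm ‖x‖_α, and f: V → L(U,V) be γ-Hölder continuous with Hölder seminorm ‖f‖_γ. Define χ_{t,s}(a) := f(a)(x_t − x_s) for a ∈ V and (s,t) ∈ 𝕋²₊. Then, with the control ω(s,t) := t − s, the growth function ϖ(u) := u^θ and δ(T) := ‖f‖_γ·‖x‖_α·T^{αγ²}, the family χ is of class O with constant at most γ^γ/(1−γ)^{1−γ}: namely osc(χ_{t,s}, L·(s−r)^θ) ≤ (γ^γ/(1−γ)^{1−γ})·δ(T)·(1+L)·(t−r)^θ for all 0 ≤ r ≤ s ≤ t ≤ T and all L ≥ 0. -/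

import Mathlib

noncomputable section

/-- A control on the simplex of `[0,T]`: vanishing on the diagonal, nonnegative
and super-additive. -/
def IsControl (T : ℝ) (ω : ℝ → ℝ → ℝ) : Prop :=
  (∀ s t, 0 ≤ s → s ≤ t → t ≤ T → 0 ≤ ω s t) ∧
  (∀ s, 0 ≤ s → s ≤ T → ω s s = 0) ∧
  (∀ r s t, 0 ≤ r → r ≤ s → s ≤ t → t ≤ T → ω r s + ω s t ≤ ω r t)

/-- The global hypotheses on the data `T`, `κ`, `δ`, `ϖ`. -/
def GoodParams (T κ : ℝ) (δ ϖ : ℝ → ℝ) : Prop :=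
  0 < T ∧ 0 < κ ∧ κ < 1 ∧
  (∀ x y, 0 ≤ x → x ≤ y → δ x ≤ δ y) ∧
  (∀ x y, 0 ≤ x → x ≤ y → ϖ x ≤ ϖ y) ∧
  δ 0 = 0 ∧ ϖ 0 = 0 ∧
  (∀ x, 0 ≤ x → 2 * ϖ (x / 2) ≤ κ * ϖ x) ∧
  κ + 2 * δ T < 1

variable {V : Type*} [NormedAddCommGroup V] [NormedSpace ℝ V]

/-- `χ` is of class `𝒪` with constant `C`:
`osc (χ t s, L * ϖ (ω r s)) ≤ C * δT * (1 + L) * ϖ (ω r t)`. -/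
def ClassO (T : ℝ) (ω : ℝ → ℝ → ℝ) (ϖ : ℝ → ℝ) (δT C : ℝ)
    (χ : ℝ → ℝ → V → V) : Prop :=
  ∀ r s t, 0 ≤ r → r ≤ s → s ≤ t → t ≤ T → ∀ L, 0 ≤ L → ∀ a b : V,
    ‖a - b‖ ≤ L * ϖ (ω r s) →
      ‖χ t s a - χ t s b‖ ≤ C * δT * (1 + L) * ϖ (ω r t)

/-- An almost flow `φ ∈ 𝒜[δ, M]`. -/
def AlmostFlow (T : ℝ) (ω : ℝ → ℝ → ℝ) (δ ϖ : ℝ → ℝ) (M : ℝ)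
    (φ : ℝ → ℝ → V → V) : Prop :=
  (∀ s t, 0 ≤ s → s ≤ t → t ≤ T → Continuous (φ t s)) ∧
  ClassO T ω ϖ (δ T) 1 (fun t s a => φ t s a - a) ∧
  (∀ s t, 0 ≤ s → s ≤ t → t ≤ T → ∀ a : V, ‖φ t s a - a‖ ≤ δ (t - s)) ∧
  (∀ r s t, 0 ≤ r → r ≤ s → s ≤ t → t ≤ T → ∀ a : V,
    ‖φ t s (φ s r a) - φ t r a‖ ≤ M * ϖ (ω r t))

/-- A partition `0 = t 0 < t 1 < ⋯ < t n = T` of `[0, T]`. -/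
def IsPartition (T : ℝ) (n : ℕ) (t : ℕ → ℝ) : Prop :=
  t 0 = 0 ∧ t n = T ∧ ∀ k, k < n → t k < t (k + 1)

/-- `y ∈ 𝒫_π[φ, a, K]`: a discrete D-solution on the partition `t` with constant `K`. -/
def DiscreteDSol (ϖ : ℝ → ℝ) (ω : ℝ → ℝ → ℝ) (φ : ℝ → ℝ → V → V)
    (n : ℕ) (t : ℕ → ℝ) (a : V) (K : ℝ) (y : ℕ → V) : Prop :=
  y 0 = a ∧ ∀ i j, i ≤ j → j ≤ n →
    ‖y j - φ (t j) (t i) (y i)‖ ≤ K * ϖ (ω (t i) (t j))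

/-- The numerical scheme of `φ` on the partition `t` started at `a`. -/
def NumScheme (φ : ℝ → ℝ → V → V) (n : ℕ) (t : ℕ → ℝ) (a : V) (y : ℕ → V) : Prop :=
  y 0 = a ∧ ∀ k, k < n → y (k + 1) = φ (t (k + 1)) (t k) (y k)

/-- `y ∈ 𝒫[φ, a, K]`: a (continuous-time) D-solution with constant `K`. -/
def DSol (T : ℝ) (ϖ : ℝ → ℝ) (ω : ℝ → ℝ → ℝ) (φ : ℝ → ℝ → V → V)
    (a : V) (K : ℝ) (y : ℝ → V) : Prop :=
  ContinuousOn y (Set.Icc 0 T) ∧ y 0 = a ∧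
  ∀ s t, 0 ≤ s → s ≤ t → t ≤ T → ‖y t - φ t s (y s)‖ ≤ K * ϖ (ω s t)

/-- The discrete functional `Φ^π_{i,j}(y) = ∑_{k=i}^{j-1} φ̂_{t_{k+1}, t_k}(y_k)`. -/
def PhiSum (φ : ℝ → ℝ → V → V) (t : ℕ → ℝ) (y : ℕ → V) (i j : ℕ) : V :=
  ∑ k ∈ Finset.Ico i j, (φ (t (k + 1)) (t k) (y k) - y k)

/-- A stable almost flow, with Lipschitz-ratio bound `dφLip` for `dφ` and
4-point control data `φCheck`, `φStar`. -/
def StableAlmostFlow (T : ℝ) (ω : ℝ → ℝ → ℝ) (δ ϖ : ℝ → ℝ) (M : ℝ)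
    (φ : ℝ → ℝ → V → V) (dφLip : ℝ) (φCheck : ℝ → ℝ → ℝ → ℝ) (φStar : ℝ → ℝ) :
    Prop :=
  AlmostFlow T ω δ ϖ M φ ∧
  (∀ s t, 0 ≤ s → s ≤ t → t ≤ T → ∀ a b : V,
    ‖(φ t s a - a) - (φ t s b - b)‖ ≤ δ T * ‖a - b‖) ∧
  (∀ r s t, 0 ≤ r → r ≤ s → s ≤ t → t ≤ T → ∀ a b : V,
    ‖(φ t s (φ s r a) - φ t r a) - (φ t s (φ s r b) - φ t r b)‖ ≤
      dφLip * ϖ (ω r t) * ‖a - b‖) ∧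
  (∀ s t, 0 ≤ s → s ≤ t → t ≤ T → ∀ a b c d : V,
    ‖φ t s a - φ t s b - φ t s c + φ t s d‖ ≤
      φCheck t s (max ‖a - b‖ ‖c - d‖) * max ‖a - c‖ ‖b - d‖ +
        (1 + δ T) * ‖a - b - c + d‖) ∧
  (∀ α, 0 ≤ α → ∀ r s t, 0 ≤ r → r ≤ s → s ≤ t → t ≤ T →
    φCheck t s (α * ϖ (ω r s)) ≤ φStar α * ϖ (ω r t))

/-- `d_𝒜(φ, ψ) ≤ ε`: all three components of the distance `d_𝒜` are at most `ε`. -/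
def dAle (T : ℝ) (ω : ℝ → ℝ → ℝ) (δ ϖ : ℝ → ℝ)
    (φ ψ : ℝ → ℝ → V → V) (ε : ℝ) : Prop :=
  (∀ s t, 0 ≤ s → s ≤ t → t ≤ T → ∀ a : V, ‖φ t s a - ψ t s a‖ ≤ ε) ∧
  ClassO T ω ϖ (δ T) ε (fun t s a => φ t s a - ψ t s a) ∧
  (∀ r s t, 0 ≤ r → r ≤ s → s ≤ t → t ≤ T → ∀ a : V,
    ‖(φ t s (φ s r a) - φ t r a) - (ψ t s (ψ s r a) - ψ t r a)‖ ≤ ε * ϖ (ω r t))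

/-- If `x` is `α`-Hölder and `f` is `γ`-Hölder with
`θ = α(1+γ) > 1`, then `χ_{t,s}(a) = f(a)(x_t - x_s)` is of class `𝒪` with constant
at most `γ^γ/(1-γ)^{1-γ}`, for the control `ω(s,t) = t - s`, `ϖ(u) = u^θ` and
`δ(T) = ‖f‖_γ ‖x‖_α T^{αγ²}`. -/
theorem stmt_17 {U V : Type*} [NormedAddCommGroup U] [NormedSpace ℝ U]
    [NormedAddCommGroup V] [NormedSpace ℝ V]
    (T α γ : ℝ) (hT : 0 < T) (hα0 : 0 < α) (hα1 : α ≤ 1) (hγ0 : 0 < γ) (hγ1 : γ < 1)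
    (hθ : 1 < α * (1 + γ))
    (x : ℝ → U) (Hx : ℝ) (hHx : 0 ≤ Hx)
    (hx : ∀ s t, 0 ≤ s → s ≤ t → t ≤ T → ‖x t - x s‖ ≤ Hx * (t - s) ^ α)
    (f : V → (U →L[ℝ] V)) (Hf : ℝ) (hHf : 0 ≤ Hf)
    (hf : ∀ a b : V, ‖f a - f b‖ ≤ Hf * ‖a - b‖ ^ γ) :
    ∀ r s t, 0 ≤ r → r ≤ s → s ≤ t → t ≤ T → ∀ L, 0 ≤ L → ∀ a b : V,
      ‖a - b‖ ≤ L * (s - r) ^ (α * (1 + γ)) →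
      ‖f a (x t - x s) - f b (x t - x s)‖ ≤
        γ ^ γ / (1 - γ) ^ (1 - γ) * (Hf * Hx * T ^ (α * γ * γ)) * (1 + L) *
          (t - r) ^ (α * (1 + γ)) := by
  intro r s t hr hrs hst htT L hL a b hab
  have hγ' : 0 < 1 - γ := by linarith
  have hsr : (0:ℝ) ≤ s - r := by linarith
  have hts : (0:ℝ) ≤ t - s := by linarith
  have htr : (0:ℝ) ≤ t - r := by linarith
  -- key scalar inequality : L ^ γ ≤ γ^γ/(1-γ)^(1-γ) * (1 + L)
  have hkey : L ^ γ ≤ γ ^ γ / (1 - γ) ^ (1 - γ) * (1 + L) := by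
    have h1 := Real.geom_mean_le_arith_mean2_weighted hγ0.le hγ'.le
      (div_nonneg hL hγ0.le) (inv_nonneg.mpr hγ'.le) (by ring)
    have h2 : (L / γ) ^ γ * ((1 - γ)⁻¹) ^ (1 - γ) =
        L ^ γ / γ ^ γ * ((1 - γ) ^ (1 - γ))⁻¹ := by
      rw [Real.div_rpow hL hγ0.le, Real.inv_rpow hγ'.le]
    have h3 : γ * (L / γ) + (1 - γ) * (1 - γ)⁻¹ = L + 1 := by
      field_simp
    rw [h2, h3] at h1
    have hγγ : (0:ℝ) < γ ^ γ := Real.rpow_pos_of_pos hγ0 _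
    have h1γ : (0:ℝ) < (1 - γ) ^ (1 - γ) := Real.rpow_pos_of_pos hγ' _
    have h4 : L ^ γ ≤ γ ^ γ * (1 - γ) ^ (1 - γ) * (L + 1) := by
      have h6 := mul_le_mul_of_nonneg_right h1
        (by positivity : (0:ℝ) ≤ γ ^ γ * (1 - γ) ^ (1 - γ))
      calc L ^ γ
          = L ^ γ / γ ^ γ * ((1 - γ) ^ (1 - γ))⁻¹ * (γ ^ γ * (1 - γ) ^ (1 - γ)) := by
            field_simp
        _ ≤ (L + 1) * (γ ^ γ * (1 - γ) ^ (1 - γ)) := h6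
        _ = γ ^ γ * (1 - γ) ^ (1 - γ) * (L + 1) := by ring
    have h5 : (1 - γ) ^ (1 - γ) ≤ ((1 - γ) ^ (1 - γ))⁻¹ := by
      have : (1 - γ) ^ (1 - γ) ≤ 1 := Real.rpow_le_one hγ'.le (by linarith) (by linarith)
      calc (1 - γ) ^ (1 - γ) ≤ 1 := this
        _ ≤ ((1 - γ) ^ (1 - γ))⁻¹ := (one_le_inv₀ h1γ).mpr this
    calc L ^ γ ≤ γ ^ γ * (1 - γ) ^ (1 - γ) * (L + 1) := h4
      _ ≤ γ ^ γ * ((1 - γ) ^ (1 - γ))⁻¹ * (L + 1) :=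
          mul_le_mul_of_nonneg_right
            (mul_le_mul_of_nonneg_left h5 hγγ.le) (by linarith)
      _ = γ ^ γ / (1 - γ) ^ (1 - γ) * (1 + L) := by ring
  -- operator bound
  have hop : ‖f a (x t - x s) - f b (x t - x s)‖ ≤
      Hf * ‖a - b‖ ^ γ * (Hx * (t - s) ^ α) := by
    calc ‖f a (x t - x s) - f b (x t - x s)‖
        = ‖(f a - f b) (x t - x s)‖ := by
          simp [ContinuousLinearMap.sub_apply]
      _ ≤ ‖f a - f b‖ * ‖x t - x s‖ := (f a - f b).le_opNorm _
      _ ≤ Hf * ‖a - b‖ ^ γ * (Hx * (t - s) ^ α) := by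
          apply mul_le_mul (hf a b) (hx s t (by linarith) hst htT) (norm_nonneg _)
          positivity
  -- bound ‖a - b‖ ^ γ
  have hab2 : ‖a - b‖ ^ γ ≤ L ^ γ * ((s - r) ^ (α * γ) * (s - r) ^ (α * γ * γ)) := by
    calc ‖a - b‖ ^ γ ≤ (L * (s - r) ^ (α * (1 + γ))) ^ γ :=
        Real.rpow_le_rpow (norm_nonneg _) hab hγ0.le
      _ = L ^ γ * (s - r) ^ (α * (1 + γ) * γ) := by
          rw [Real.mul_rpow hL (Real.rpow_nonneg hsr _), ← Real.rpow_mul hsr]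
      _ = L ^ γ * ((s - r) ^ (α * γ) * (s - r) ^ (α * γ * γ)) := by
          rw [← Real.rpow_add_of_nonneg hsr (by positivity) (by positivity)]
          ring_nf
  have hmono1 : (s - r) ^ (α * γ) ≤ (t - r) ^ (α * γ) :=
    Real.rpow_le_rpow hsr (by linarith) (by positivity)
  have hmono2 : (s - r) ^ (α * γ * γ) ≤ T ^ (α * γ * γ) :=
    Real.rpow_le_rpow hsr (by linarith) (by positivity)
  have hmono3 : (t - s) ^ α ≤ (t - r) ^ α :=
    Real.rpow_le_rpow hts (by linarith) hα0.le
  have hsplit : (t - r) ^ (α * γ) * (t - r) ^ α = (t - r) ^ (α * (1 + γ)) := by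
    rw [← Real.rpow_add_of_nonneg htr (by positivity) hα0.le]
    ring_nf
  calc ‖f a (x t - x s) - f b (x t - x s)‖
      ≤ Hf * ‖a - b‖ ^ γ * (Hx * (t - s) ^ α) := hop
    _ ≤ Hf * (L ^ γ * ((t - r) ^ (α * γ) * T ^ (α * γ * γ))) * (Hx * (t - r) ^ α) := by
        gcongr
        calc ‖a - b‖ ^ γ ≤ L ^ γ * ((s - r) ^ (α * γ) * (s - r) ^ (α * γ * γ)) := hab2
          _ ≤ L ^ γ * ((t - r) ^ (α * γ) * T ^ (α * γ * γ)) := by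
              gcongr <;> positivity
    _ ≤ Hf * (γ ^ γ / (1 - γ) ^ (1 - γ) * (1 + L) *
          ((t - r) ^ (α * γ) * T ^ (α * γ * γ))) * (Hx * (t - r) ^ α) := by
        gcongr <;> first | exact hkey | positivity
    _ = γ ^ γ / (1 - γ) ^ (1 - γ) * (Hf * Hx * T ^ (α * γ * γ)) * (1 + L) *
          ((t - r) ^ (α * γ) * (t - r) ^ α) := by ring
    _ = γ ^ γ / (1 - γ) ^ (1 - γ) * (Hf * Hx * T ^ (α * γ * γ)) * (1 + L) *
          (t - r) ^ (α * (1 + γ)) := by rw [hsplit]
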